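/- For the pressure law P(ρ) = k²ρ^γ with k > 0 and γ > 1, the integral ∫₀^ρ √(P'(σ))/(σ + P(σ)/c²) dσ equals (2c√γ/(γ−1))·Arctan(k·ρ^{(γ−1)/2}/c) for all ρ ≥ 0. -/

import Mathlib

open Real intervalIntegral

/-- For `P(ρ) = k²ρ^γ` with `k > 0`, `γ > 1`:
`∫₀^ρ √(P'(σ))/(σ + P(σ)/c²) dσ = (2c√γ/(γ−1))·arctan(k·ρ^{(γ−1)/2}/c)` for all `ρ ≥ 0`. -/
theorem stmt1 (c k γ : ℝ) (hc : 0 < c) (hk : 0 < k) (hγ : 1 < γ) :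
    ∀ ρ : ℝ, 0 ≤ ρ →
      (∫ σ in (0:ℝ)..ρ, (k * Real.sqrt γ * σ ^ ((γ - 1) / 2)) / (σ + k ^ 2 * σ ^ γ / c ^ 2))
        = (2 * c * Real.sqrt γ / (γ - 1)) * Real.arctan (k * ρ ^ ((γ - 1) / 2) / c) := by
  intro ρ hρ
  have hγ1 : (0:ℝ) < γ - 1 := by linarith
  set e : ℝ := (γ - 1) / 2 with he_def
  have he : 0 < e := by positivity
  set C : ℝ := 2 * c * Real.sqrt γ / (γ - 1) with hC
  set F : ℝ → ℝ := fun x => C * Real.arctan (k * x ^ e / c) with hF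
  set f : ℝ → ℝ := fun σ => k * Real.sqrt γ * σ ^ e / (σ + k ^ 2 * σ ^ γ / c ^ 2) with hf
  have hrpow_cont : Continuous fun x : ℝ => x ^ e :=
    continuous_iff_continuousAt.2 fun x => Real.continuousAt_rpow_const x e (Or.inr he.le)
  have hrpow_contγ : Continuous fun x : ℝ => x ^ γ :=
    continuous_iff_continuousAt.2 fun x =>
      Real.continuousAt_rpow_const x γ (Or.inr (by linarith))
  have hcont : ContinuousOn F (Set.Icc 0 ρ) := by
    apply Continuous.continuousOn
    exact continuous_const.mul (Real.continuous_arctan.comp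
      ((continuous_const.mul hrpow_cont).div_const c))
  have hderiv : ∀ x ∈ Set.Ioo 0 ρ, HasDerivWithinAt F (f x) (Set.Ioi x) x := by
    intro x hx
    have hx0 : 0 < x := hx.1
    have h1 : HasDerivAt (fun y : ℝ => y ^ e) (e * x ^ (e - 1)) x :=
      Real.hasDerivAt_rpow_const (Or.inl hx0.ne')
    have h2 : HasDerivAt (fun y : ℝ => k * y ^ e / c) (k * (e * x ^ (e - 1)) / c) x :=
      (h1.const_mul k).div_const c
    have h3 : HasDerivAt F
        (C * (1 / (1 + (k * x ^ e / c) ^ 2) * (k * (e * x ^ (e - 1)) / c))) x :=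
      by have := ((Real.hasDerivAt_arctan (k * x ^ e / c)).comp x h2).const_mul C; exact this
    have key : C * (1 / (1 + (k * x ^ e / c) ^ 2) * (k * (e * x ^ (e - 1)) / c))
        = k * Real.sqrt γ * x ^ e / (x + k ^ 2 * x ^ γ / c ^ 2) := by
      have hxe2 : x ^ e * x ^ e = x ^ (γ - 1) := by
        rw [← Real.rpow_add hx0]; congr 1; rw [he_def]; ring
      have hxg : x ^ γ = x * (x ^ e * x ^ e) := by
        rw [hxe2]
        nth_rewrite 1 [show γ = 1 + (γ - 1) by ring]
        rw [Real.rpow_add hx0, Real.rpow_one]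
      have hxe1 : x ^ (e - 1) = x ^ e / x := by
        rw [Real.rpow_sub hx0, Real.rpow_one]
      have hden : 0 < 1 + (k * x ^ e / c) ^ 2 := by positivity
      have hxe0 : 0 < x ^ e := Real.rpow_pos_of_pos hx0 e
      have hden2 : 0 < x + k ^ 2 * x ^ γ / c ^ 2 := by
        have : 0 < x ^ γ := Real.rpow_pos_of_pos hx0 γ
        positivity
      rw [hC, hxg, hxe1, he_def]
      field_simp
    exact (key ▸ h3).hasDerivWithinAt
  have hgint : IntervalIntegrable (fun σ : ℝ => k * Real.sqrt γ * σ ^ (e - 1))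
      MeasureTheory.volume 0 ρ := by
    have : IntervalIntegrable (fun σ : ℝ => σ ^ (e - 1)) MeasureTheory.volume 0 ρ :=
      intervalIntegral.intervalIntegrable_rpow' (by linarith)
    exact this.const_mul _
  have hint : IntervalIntegrable f MeasureTheory.volume 0 ρ := by
    apply hgint.mono_fun
    · apply Measurable.aestronglyMeasurable
      exact ((continuous_const.mul hrpow_cont).measurable).div
        (continuous_id.add ((continuous_const.mul hrpow_contγ).div_const _)).measurable
    · rw [Set.uIoc_of_le hρ]
      refine (MeasureTheory.ae_restrict_iff' measurableSet_Ioc).mpr ?_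
      filter_upwards with x hx
      have hx0 : 0 < x := hx.1
      have hnum : 0 ≤ k * Real.sqrt γ * x ^ e := by positivity
      have hxg0 : 0 ≤ k ^ 2 * x ^ γ / c ^ 2 := by positivity
      have hfx : 0 ≤ f x := div_nonneg hnum (by linarith)
      have hgx : 0 ≤ k * Real.sqrt γ * x ^ (e - 1) := by positivity
      rw [Real.norm_eq_abs, Real.norm_eq_abs, abs_of_nonneg hfx, abs_of_nonneg hgx]
      have hxe1 : x ^ (e - 1) = x ^ e / x := by
        rw [Real.rpow_sub hx0, Real.rpow_one]
      show k * Real.sqrt γ * x ^ e / (x + k ^ 2 * x ^ γ / c ^ 2)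
          ≤ k * Real.sqrt γ * x ^ (e - 1)
      rw [hxe1, mul_div_assoc, mul_div_assoc]
      gcongr
      have h0 : 0 ≤ k ^ 2 * (x ^ γ / c ^ 2) := by positivity
      linarith
  have hFTC := intervalIntegral.integral_eq_sub_of_hasDeriv_right_of_le hρ hcont hderiv hint
  have hF0 : F 0 = 0 := by
    simp [hF, Real.zero_rpow he.ne']
  calc (∫ σ in (0:ℝ)..ρ, (k * Real.sqrt γ * σ ^ ((γ - 1) / 2)) / (σ + k ^ 2 * σ ^ γ / c ^ 2))
      = ∫ σ in (0:ℝ)..ρ, f σ := by rw [hf]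
    _ = F ρ - F 0 := hFTC
    _ = C * Real.arctan (k * ρ ^ e / c) := by rw [hF0, hF]; ring
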